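/- arXiv:1901.03777 — 2 statements merged into one kernel-verified Lean document; each statement's English description precedes it below -/
import Mathlib

section
/- Let f₁,...,f_N : H → ℝ ∪ {+∞} be proper lsc convex with Σ_{i<j}⟨x_i,x_j⟩ ≤ Σ_i f_i(x_i) for all x, and let Γ be the set where equality holds. If s ∈ H satisfies Σ_{i=1}^N e_{f_i^*}(s) = ½‖s‖², then (prox_{f₁}(s), ..., prox_{f_N}(s)) ∈ Γ and Σ_i prox_{f_i}(s) = s. -/
open scoped RealInnerProductSpace BigOperators

set_option linter.unusedSectionVars false
set_option linter.unusedVariables false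
set_option maxHeartbeats 1000000

noncomputable section

variable {H : Type*} [NormedAddCommGroup H] [InnerProductSpace ℝ H] [CompleteSpace H]

/-- The multi-marginal cost `c(x₁,...,x_N) = ∑_{i<j} ⟪x_i, x_j⟫`. -/
def cost {N : ℕ} (x : Fin N → H) : ℝ :=
  ∑ i : Fin N, ∑ j : Fin N, if i < j then ⟪x i, x j⟫ else 0

/-- `q(x) = ½‖x‖²`. -/
def q (x : H) : ℝ := (1 / 2) * ‖x‖ ^ 2

/-- Convexity for extended-real-valued functions. -/
def EConvex (f : H → EReal) : Prop :=
  ∀ x y : H, ∀ a b : ℝ, 0 ≤ a → 0 ≤ b → a + b = 1 →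
    f (a • x + b • y) ≤ (a : EReal) * f x + (b : EReal) * f y

/-- The Fenchel conjugate `f*(u) = sup_x (⟪u,x⟫ - f(x))`. -/
def econj (f : H → EReal) (u : H) : EReal :=
  ⨆ x : H, ((⟪u, x⟫ : ℝ) : EReal) - f x

/-- The Moreau envelope `e_f(s) = inf_x (f(x) + q(s - x))`. -/
def env (f : H → EReal) (s : H) : EReal :=
  ⨅ x : H, f x + ((q (s - x) : ℝ) : EReal)

lemma q_nonneg (x : H) : 0 ≤ q x := by unfold q; positivity

lemma q_sub (s x : H) : q (s - x) = q s - ⟪s, x⟫ + q x := by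
  simp only [q, @norm_sub_sq_real]; ring

lemma young (a b : H) : ⟪a, b⟫ ≤ q a + q b := by
  have := q_nonneg (a - b); rw [q_sub] at this; linarith

lemma q_midpoint (a b : H) :
    q ((1/2 : ℝ) • a + (1/2 : ℝ) • b) = (1/2) * q a + (1/2) * q b - (1/8) * ‖a - b‖^2 := by
  have hpar := parallelogram_law_with_norm ℝ a b
  have : ‖(1/2 : ℝ) • a + (1/2 : ℝ) • b‖^2 = (1/4) * ‖a + b‖^2 := by
    rw [← smul_add, norm_smul, mul_pow]
    norm_num
  simp only [q, this]
  nlinarith [hpar]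

lemma q_smul (t : ℝ) (x : H) : q (t • x) = t^2 * q x := by
  simp only [q, norm_smul, mul_pow]
  rw [Real.norm_eq_abs, sq_abs]; ring

lemma coe_fsum {ι : Type*} (s : Finset ι) (g : ι → ℝ) :
    ((∑ i ∈ s, g i : ℝ) : EReal) = ∑ i ∈ s, (g i : EReal) := by
  induction s using Finset.cons_induction with
  | empty => simp
  | cons a s h ih => rw [Finset.sum_cons, Finset.sum_cons, EReal.coe_add, ih]

/-- lower bound on env of conjugate -/
lemma const_le_env_econj (g : H → EReal) (x : H) (gx : ℝ) (hx : g x = (gx : EReal)) (s : H) :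
    ((⟪s, x⟫ - q x - gx : ℝ) : EReal) ≤ env (econj g) s := by
  refine le_iInf fun u => ?_
  have h1 : ((⟪u, x⟫ - gx : ℝ) : EReal) ≤ econj g u := by
    have := le_iSup (fun y => ((⟪u, y⟫ : ℝ) : EReal) - g y) x
    rwa [hx, ← EReal.coe_sub] at this
  calc ((⟪s, x⟫ - q x - gx : ℝ) : EReal)
      ≤ ((⟪u, x⟫ - gx + q (s - u) : ℝ) : EReal) := by
        apply EReal.coe_le_coe_iff.2
        have := young (s - u) x
        rw [inner_sub_left] at this
        linarith
    _ = ((⟪u, x⟫ - gx : ℝ) : EReal) + ((q (s - u) : ℝ) : EReal) := by rw [EReal.coe_add]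
    _ ≤ econj g u + ((q (s - u) : ℝ) : EReal) := add_le_add_left h1 _

/-- weak duality pointwise -/
lemma weak_duality (g : H → EReal) (hb : ∀ x, g x ≠ ⊥) (s : H) (r : ℝ)
    (henv : env (econj g) s ≤ (r : EReal)) (x : H) :
    ((q s - r : ℝ) : EReal) ≤ g x + ((q (s - x) : ℝ) : EReal) := by
  rcases eq_or_ne (g x) ⊤ with htop | htop
  · rw [htop, EReal.top_add_of_ne_bot (EReal.coe_ne_bot _)]; exact le_top
  · obtain ⟨gx, hgx⟩ : ∃ gx : ℝ, g x = (gx : EReal) := ⟨(g x).toReal, (EReal.coe_toReal htop (hb x)).symm⟩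
    have h1 : ((⟪s, x⟫ - q x - gx : ℝ) : EReal) ≤ (r : EReal) :=
      le_trans (const_le_env_econj g x gx hgx s) henv
    have h2 : ⟪s, x⟫ - q x - gx ≤ r := EReal.coe_le_coe_iff.1 h1
    rw [hgx, ← EReal.coe_add]
    apply EReal.coe_le_coe_iff.2
    have := q_sub s x
    linarith

/-- existence of the proximal point -/
lemma prox_exists (g : H → EReal) (hb : ∀ x, g x ≠ ⊥) (hlsc : LowerSemicontinuous g)
    (hconv : EConvex g) (s : H) (m : ℝ) (hm : env g s = (m : EReal)) :
    ∃ p : H, ∀ x : H, g p + ((q (s - p) : ℝ) : EReal) ≤ g x + ((q (s - x) : ℝ) : EReal) := by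
  have hlow : ∀ x, (m : EReal) ≤ g x + ((q (s - x) : ℝ) : EReal) := by
    intro x; rw [← hm]; exact iInf_le _ x
  -- minimizing sequence
  have hseq : ∀ n : ℕ, ∃ x : H, g x + ((q (s - x) : ℝ) : EReal) < ((m + 1/(n+1) : ℝ) : EReal) := by
    intro n
    have : env g s < ((m + 1/(n+1) : ℝ) : EReal) := by
      rw [hm]; apply EReal.coe_lt_coe_iff.2; have : (0:ℝ) < 1/(n+1) := by positivity
      linarith
    exact iInf_lt_iff.1 this
  choose x hx using hseq
  -- real values
  have hxtop : ∀ n, g (x n) ≠ ⊤ := by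
    intro n h
    have := hx n
    rw [h, EReal.top_add_of_ne_bot (EReal.coe_ne_bot _)] at this
    exact (not_top_lt this)
  set a : ℕ → ℝ := fun n => (g (x n)).toReal with ha_def
  have ha : ∀ n, g (x n) = ((a n : ℝ) : EReal) := fun n => (EReal.coe_toReal (hxtop n) (hb _)).symm
  have hareal : ∀ n, a n + q (s - x n) < m + 1/(n+1) := by
    intro n
    have := hx n
    rw [ha n, ← EReal.coe_add] at this
    exact EReal.coe_lt_coe_iff.1 this
  -- midpoint estimate
  have hmid : ∀ n k : ℕ, (1/8) * ‖x n - x k‖^2 ≤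
      (1/2) * (a n + q (s - x n)) + (1/2) * (a k + q (s - x k)) - m := by
    intro n k
    set z := (1/2 : ℝ) • x n + (1/2 : ℝ) • x k with hz
    have hgz : g z ≤ ((a n / 2 + a k / 2 : ℝ) : EReal) := by
      have := hconv (x n) (x k) (1/2) (1/2) (by norm_num) (by norm_num) (by norm_num)
      rw [ha n, ha k] at this
      calc g z ≤ ((1/2 : ℝ) : EReal) * ((a n : ℝ) : EReal) + ((1/2 : ℝ) : EReal) * ((a k : ℝ) : EReal) := this
        _ = ((a n / 2 + a k / 2 : ℝ) : EReal) := by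
            norm_cast
            ring
    have hqz : q (s - z) = (1/2) * q (s - x n) + (1/2) * q (s - x k) - (1/8) * ‖x n - x k‖^2 := by
      have hsz : s - z = (1/2 : ℝ) • (s - x n) + (1/2 : ℝ) • (s - x k) := by
        rw [hz]; module
      rw [hsz, q_midpoint]
      have : (s - x n) - (s - x k) = x k - x n := by abel
      rw [this, norm_sub_rev]
    have hmz : (m : EReal) ≤ ((a n / 2 + a k / 2 + q (s - z) : ℝ) : EReal) := by
      refine le_trans (hlow z) ?_
      rw [EReal.coe_add]
      exact add_le_add_left hgz _
    have := EReal.coe_le_coe_iff.1 hmz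
    rw [hqz] at this
    linarith
  -- cauchy
  have hcauchy : CauchySeq x := by
    rw [Metric.cauchySeq_iff']
    intro ε hε
    obtain ⟨N, hN⟩ := exists_nat_gt (8 / ε^2)
    refine ⟨N, fun n hn => ?_⟩
    have h1 : ‖x n - x N‖^2 ≤ 4 * (1/(n+1) + 1/(N+1)) := by
      have := hmid n N
      have h2 := hareal n
      have h3 := hareal N
      nlinarith
    have h4 : (1:ℝ)/(n+1) ≤ 1/(N+1) := by
      apply one_div_le_one_div_of_le (by positivity)
      exact_mod_cast by omega
    have h5 : ‖x n - x N‖^2 < ε^2 := by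
      have h6 : (8:ℝ)/(N+1) < ε^2 := by
        rw [div_lt_iff₀ (by positivity)]
        have h7 : (8:ℝ) / ε^2 < N + 1 := lt_of_lt_of_le hN (by linarith)
        calc (8:ℝ) = (8/ε^2) * ε^2 := by field_simp
          _ < (N+1) * ε^2 := by
              apply mul_lt_mul_of_pos_right h7 (by positivity)
          _ = ε^2 * (N+1) := by ring
      calc ‖x n - x N‖^2 ≤ 4 * (1/(n+1) + 1/(N+1)) := h1
        _ ≤ 8/(N+1) := by
              have h8 : (8:ℝ)/((N:ℝ)+1) = 8 * (1/((N:ℝ)+1)) := by ring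
              linarith
        _ < ε^2 := h6
    rw [dist_eq_norm]
    exact lt_of_pow_lt_pow_left₀ 2 (le_of_lt hε) h5
  obtain ⟨p, hp⟩ := cauchySeq_tendsto_of_complete hcauchy
  refine ⟨p, fun y => le_trans ?_ (hlow y)⟩
  -- g p + q (s - p) ≤ m
  by_contra hcon
  push_neg at hcon
  have hgp : ((m - q (s - p) : ℝ) : EReal) < g p := by
    rcases eq_or_ne (g p) ⊤ with h | h
    · rw [h]; exact EReal.coe_lt_top _
    · obtain ⟨gp, hgpv⟩ : ∃ gp : ℝ, g p = (gp : EReal) := ⟨(g p).toReal, (EReal.coe_toReal h (hb p)).symm⟩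
      rw [hgpv, ← EReal.coe_add] at hcon
      rw [hgpv]
      apply EReal.coe_lt_coe_iff.2
      have := EReal.coe_lt_coe_iff.1 hcon
      linarith
  obtain ⟨c, hc1, hc2⟩ := EReal.exists_between_coe_real hgp
  have hc1' : m - q (s - p) < c := EReal.coe_lt_coe_iff.1 hc1
  -- eventually c < g (x n)
  have hev : ∀ᶠ n in Filter.atTop, (c : EReal) < g (x n) :=
    hp.eventually ((hlsc p) (c : EReal) hc2)
  -- c + q (s - x n) < m + 1/(n+1) eventually
  have hev2 : ∀ᶠ n in Filter.atTop, c + q (s - x n) ≤ m + 1/(n+1) := by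
    filter_upwards [hev] with n hn
    have : c < a n := EReal.coe_lt_coe_iff.1 (by rw [← ha n]; exact hn)
    have := hareal n
    linarith
  -- take limits
  have hlim : Filter.Tendsto (fun n : ℕ => m + 1/(n+1) - q (s - x n)) Filter.atTop (nhds (m - q (s - p))) := by
    have h1 : Filter.Tendsto (fun n : ℕ => q (s - x n)) Filter.atTop (nhds (q (s - p))) := by
      have hqc : Continuous (fun y : H => q (s - y)) := by
        simp only [q]
        exact continuous_const.mul (((continuous_const.sub continuous_id).norm).pow 2)
      exact (hqc.tendsto p).comp hp
    have h2 : Filter.Tendsto (fun n : ℕ => m + 1/((n:ℝ)+1)) Filter.atTop (nhds (m + 0)) :=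
      Filter.Tendsto.const_add m tendsto_one_div_add_atTop_nhds_zero_nat
    rw [add_zero] at h2
    exact h2.sub h1
  have : c ≤ m - q (s - p) := by
    apply ge_of_tendsto hlim
    filter_upwards [hev2] with n hn
    linarith
  linarith

lemma subgrad (g : H → EReal) (hb : ∀ x, g x ≠ ⊥) (hconv : EConvex g) (s p : H) (b : ℝ)
    (hgp : g p = (b : EReal))
    (hmin : ∀ x, g p + ((q (s - p) : ℝ) : EReal) ≤ g x + ((q (s - x) : ℝ) : EReal)) (x : H) :
    ((b + ⟪s - p, x - p⟫ : ℝ) : EReal) ≤ g x := by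
  rcases eq_or_ne (g x) ⊤ with htop | htop
  · rw [htop]; exact le_top
  obtain ⟨v, hv⟩ : ∃ v : ℝ, g x = (v : EReal) := ⟨(g x).toReal, (EReal.coe_toReal htop (hb x)).symm⟩
  have key : ∀ n : ℕ, ⟪s - p, x - p⟫ ≤ v - b + (1/((n:ℝ)+1)) * q (x - p) := by
    intro n
    set t : ℝ := 1/((n:ℝ)+1) with htdef
    have ht : 0 < t := by positivity
    have ht1 : t ≤ 1 := by
      rw [htdef]
      rw [div_le_one (by positivity)]
      have : (0:ℝ) ≤ n := Nat.cast_nonneg n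
      linarith
    have hz := hconv x p t (1-t) ht.le (by linarith) (by ring)
    rw [hv, hgp] at hz
    have hz' : g (t • x + (1-t) • p) ≤ ((t*v + (1-t)*b : ℝ) : EReal) := by
      refine le_trans hz ?_
      norm_cast
    have hmz := hmin (t • x + (1-t) • p)
    rw [hgp, ← EReal.coe_add] at hmz
    have hsz : s - (t • x + (1-t) • p) = (s - p) - t • (x - p) := by module
    have hq : q (s - (t • x + (1-t) • p)) = q (s - p) - t * ⟪s - p, x - p⟫ + t^2 * q (x - p) := by
      rw [hsz, q_sub, real_inner_smul_right, q_smul]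
    have hreal : b + q (s - p) ≤ t*v + (1-t)*b + q (s - (t • x + (1-t) • p)) := by
      have h2 : ((b + q (s - p) : ℝ) : EReal) ≤ ((t*v + (1-t)*b + q (s - (t • x + (1-t) • p)) : ℝ) : EReal) := by
        refine le_trans hmz ?_
        rw [EReal.coe_add]
        exact add_le_add_left hz' _
      exact EReal.coe_le_coe_iff.1 h2
    rw [hq] at hreal
    have h0 : 0 ≤ t * (v - b + t * q (x - p) - ⟪s - p, x - p⟫) := by nlinarith
    rw [mul_nonneg_iff_of_pos_left ht] at h0
    linarith
  have hlim : Filter.Tendsto (fun n : ℕ => v - b + (1/((n:ℝ)+1)) * q (x - p)) Filter.atTop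
      (nhds (v - b)) := by
    have h2 := tendsto_one_div_add_atTop_nhds_zero_nat.mul_const (q (x - p))
    rw [zero_mul] at h2
    have := Filter.Tendsto.const_add (v - b) h2
    rwa [add_zero] at this
  have hfin : ⟪s - p, x - p⟫ ≤ v - b := ge_of_tendsto' hlim (fun n => key n)
  rw [hv]
  apply EReal.coe_le_coe_iff.2
  linarith

lemma econj_le_bound (g : H → EReal) (s p : H) (b : ℝ)
    (hsub : ∀ x, ((b + ⟪s - p, x - p⟫ : ℝ) : EReal) ≤ g x) :
    econj g (s - p) ≤ ((⟪s - p, p⟫ - b : ℝ) : EReal) := by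
  refine iSup_le fun x => ?_
  rcases eq_or_ne (g x) ⊤ with htop | htop
  · rw [htop, EReal.sub_top]; exact bot_le
  have hx := hsub x
  rcases eq_or_ne (g x) ⊥ with hbot | hbot
  · rw [hbot] at hx; exact absurd hx (by simp)
  obtain ⟨v, hv⟩ : ∃ v : ℝ, g x = (v : EReal) := ⟨(g x).toReal, (EReal.coe_toReal htop hbot).symm⟩
  rw [hv] at hx ⊢
  rw [← EReal.coe_sub]
  apply EReal.coe_le_coe_iff.2
  have hxr : b + ⟪s - p, x - p⟫ ≤ v := EReal.coe_le_coe_iff.1 hx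
  rw [inner_sub_right] at hxr
  linarith

lemma q_sum {N : ℕ} (p : Fin N → H) : q (∑ i, p i) = ∑ i, q (p i) + cost p := by
  have h1 : ‖∑ i, p i‖^2 = ∑ i : Fin N, ∑ j : Fin N, ⟪p i, p j⟫ := by
    rw [← real_inner_self_eq_norm_sq]
    rw [sum_inner]
    exact Finset.sum_congr rfl fun i _ => inner_sum _ _ _
  have h2 : ∀ i j : Fin N, ⟪p i, p j⟫ =
      (if i < j then ⟪p i, p j⟫ else 0) + (if j < i then ⟪p i, p j⟫ else 0)
        + (if i = j then ⟪p i, p j⟫ else 0) := by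
    intro i j
    rcases lt_trichotomy i j with h | h | h
    · simp [h, asymm h, ne_of_lt h]
    · simp [h]
    · simp [asymm h, h, ne_of_gt h]
  have h3 : ∑ i : Fin N, ∑ j : Fin N, ⟪p i, p j⟫ =
      cost p + (∑ i : Fin N, ∑ j : Fin N, if j < i then ⟪p i, p j⟫ else 0)
        + ∑ i : Fin N, ⟪p i, p i⟫ := by
    have hd : ∀ i : Fin N, (∑ j : Fin N, if i = j then ⟪p i, p j⟫ else 0) = ⟪p i, p i⟫ := by
      intro i
      rw [Finset.sum_ite_eq]
      simp
    calc ∑ i : Fin N, ∑ j : Fin N, ⟪p i, p j⟫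
        = ∑ i : Fin N, ∑ j : Fin N, ((if i < j then ⟪p i, p j⟫ else 0)
            + (if j < i then ⟪p i, p j⟫ else 0) + (if i = j then ⟪p i, p j⟫ else 0)) := by
          exact Finset.sum_congr rfl fun i _ => Finset.sum_congr rfl fun j _ => h2 i j
      _ = cost p + (∑ i : Fin N, ∑ j : Fin N, if j < i then ⟪p i, p j⟫ else 0)
            + ∑ i : Fin N, ⟪p i, p i⟫ := by
          simp only [Finset.sum_add_distrib]
          rw [cost]
          congr 1
          exact Finset.sum_congr rfl fun i _ => hd i
  have h4 : (∑ i : Fin N, ∑ j : Fin N, if j < i then ⟪p i, p j⟫ else 0) = cost p := by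
    rw [Finset.sum_comm, cost]
    exact Finset.sum_congr rfl fun i _ => Finset.sum_congr rfl fun j _ => by
      rcases eq_or_ne (i < j) True with _ | _
      · exact if_congr Iff.rfl (real_inner_comm _ _) rfl
      · exact if_congr Iff.rfl (real_inner_comm _ _) rfl
  have h5 : ∑ i : Fin N, ⟪p i, p i⟫ = ∑ i : Fin N, ‖p i‖^2 := by
    exact Finset.sum_congr rfl fun i _ => real_inner_self_eq_norm_sq _
  have h6 : ∑ i : Fin N, q (p i) = (1/2) * ∑ i : Fin N, ‖p i‖^2 := by
    rw [Finset.mul_sum]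
    rfl
  rw [q, h1, h3, h4, h5, h6]
  ring

/-- If equality `∑ᵢ e_{fᵢ*}(s) = q(s)` holds at `s`, then the proximal points
`pᵢ = prox_{fᵢ}(s)` exist, `(p₁,...,p_N)` lies in the `c`-splitting set generated by
`(f₁,...,f_N)`, and `∑ᵢ pᵢ = s`. -/
theorem envelope_equality_gives_splitting_point {N : ℕ} (hN : 2 ≤ N)
    (f : Fin N → H → EReal)
    (hproper : ∀ i, (∃ x, f i x ≠ ⊤) ∧ ∀ x, f i x ≠ ⊥)
    (hlsc : ∀ i, LowerSemicontinuous (f i))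
    (hconv : ∀ i, EConvex (f i))
    (hineq : ∀ x : Fin N → H, ((cost x : ℝ) : EReal) ≤ ∑ i, f i (x i))
    (s : H) (heq : ∑ i, env (econj (f i)) s = ((q s : ℝ) : EReal)) :
    (∃ p : Fin N → H, ∀ i, ∀ x : H,
        f i (p i) + ((q (s - p i) : ℝ) : EReal) ≤ f i x + ((q (s - x) : ℝ) : EReal)) ∧
    (∀ p : Fin N → H,
      (∀ i, ∀ x : H,
        f i (p i) + ((q (s - p i) : ℝ) : EReal) ≤ f i x + ((q (s - x) : ℝ) : EReal)) →
      ((cost p : ℝ) : EReal) = ∑ i, f i (p i) ∧ ∑ i, p i = s) := by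
  choose x0 hx0 using fun i => (hproper i).1
  have hbot : ∀ i x, f i x ≠ ⊥ := fun i => (hproper i).2
  have hx0r : ∀ i, ∃ c : ℝ, f i (x0 i) = (c : EReal) :=
    fun i => ⟨(f i (x0 i)).toReal, (EReal.coe_toReal (hx0 i) (hbot i _)).symm⟩
  choose c0 hc0 using hx0r
  have hLb : ∀ i, ((⟪s, x0 i⟫ - q (x0 i) - c0 i : ℝ) : EReal) ≤ env (econj (f i)) s :=
    fun i => const_le_env_econj (f i) (x0 i) (c0 i) (hc0 i) s
  have henvb : ∀ i, env (econj (f i)) s ≠ ⊥ :=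
    fun i => (lt_of_lt_of_le (EReal.bot_lt_coe _) (hLb i)).ne'
  have henvt : ∀ i, env (econj (f i)) s ≠ ⊤ := by
    intro j hj
    have hsum : ∑ i, env (econj (f i)) s = ⊤ := by
      rw [← Finset.add_sum_erase Finset.univ (fun i => env (econj (f i)) s) (Finset.mem_univ j),
        hj]
      apply EReal.top_add_of_ne_bot
      intro h
      have hge : ((∑ i ∈ Finset.univ.erase j, (⟪s, x0 i⟫ - q (x0 i) - c0 i) : ℝ) : EReal)
          ≤ ∑ i ∈ Finset.univ.erase j, env (econj (f i)) s := by
        rw [coe_fsum]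
        exact Finset.sum_le_sum fun i _ => hLb i
      rw [h] at hge
      exact EReal.coe_ne_bot _ (le_bot_iff.1 hge)
    rw [hsum] at heq
    exact absurd heq.symm (EReal.coe_ne_top _)
  have hrex : ∀ i, ∃ r : ℝ, env (econj (f i)) s = (r : EReal) :=
    fun i => ⟨_, (EReal.coe_toReal (henvt i) (henvb i)).symm⟩
  choose r hrv using hrex
  have hrsum : ∑ i, r i = q s := by
    have h1 : ((∑ i, r i : ℝ) : EReal) = ((q s : ℝ) : EReal) := by
      rw [coe_fsum, ← heq]
      exact (Finset.sum_congr rfl fun i _ => (hrv i).symm)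
    exact EReal.coe_eq_coe_iff.1 h1
  -- finiteness of the envelopes and existence of proximal points
  have hmex : ∀ i, ∃ m : ℝ, env (f i) s = (m : EReal) := by
    intro i
    have hub : env (f i) s ≤ ((c0 i + q (s - x0 i) : ℝ) : EReal) := by
      have h1 := iInf_le (fun x => f i x + ((q (s - x) : ℝ) : EReal)) (x0 i)
      rwa [hc0 i, ← EReal.coe_add] at h1
    have hlb2 : ((q s - r i : ℝ) : EReal) ≤ env (f i) s :=
      le_iInf fun x => weak_duality (f i) (hbot i) s (r i) (le_of_eq (hrv i)) x
    exact ⟨(env (f i) s).toReal,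
      (EReal.coe_toReal (ne_top_of_le_ne_top (EReal.coe_ne_top _) hub)
        (lt_of_lt_of_le (EReal.bot_lt_coe _) hlb2).ne').symm⟩
  choose m hmv using hmex
  have hex : ∀ i, ∃ p : H, ∀ x : H,
      f i p + ((q (s - p) : ℝ) : EReal) ≤ f i x + ((q (s - x) : ℝ) : EReal) :=
    fun i => prox_exists (f i) (hbot i) (hlsc i) (hconv i) s (m i) (hmv i)
  choose P hP using hex
  refine ⟨⟨P, hP⟩, ?_⟩
  intro p hp
  -- f i (p i) is finite
  have hbex : ∀ i, ∃ b : ℝ, f i (p i) = (b : EReal) := by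
    intro i
    refine ⟨(f i (p i)).toReal, (EReal.coe_toReal ?_ (hbot i _)).symm⟩
    intro htop
    have h1 := hp i (x0 i)
    rw [htop, EReal.top_add_of_ne_bot (EReal.coe_ne_bot _), hc0 i, ← EReal.coe_add] at h1
    exact EReal.coe_ne_top _ (top_le_iff.1 h1)
  choose b hbv using hbex
  have hfsum : ∑ i, f i (p i) = ((∑ i, b i : ℝ) : EReal) := by
    rw [coe_fsum]
    exact Finset.sum_congr rfl fun i _ => hbv i
  -- bound on r i
  have hrb : ∀ i, r i ≤ ⟪s, p i⟫ - q (p i) - b i := by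
    intro i
    have hsub := subgrad (f i) (hbot i) (hconv i) s (p i) (b i) (hbv i) (hp i)
    have h2 := econj_le_bound (f i) s (p i) (b i) hsub
    have h3 := iInf_le (fun u => econj (f i) u + ((q (s - u) : ℝ) : EReal)) (s - p i)
    rw [sub_sub_cancel] at h3
    have h4 : env (econj (f i)) s ≤ ((⟪s - p i, p i⟫ - b i + q (p i) : ℝ) : EReal) := by
      refine le_trans h3 ?_
      rw [EReal.coe_add]
      exact add_le_add_left h2 _
    rw [hrv i] at h4
    have h5 := EReal.coe_le_coe_iff.1 h4
    rw [inner_sub_left, real_inner_self_eq_norm_sq] at h5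
    have hq2 : ‖p i‖^2 = 2 * q (p i) := by rw [q]; ring
    rw [hq2] at h5
    linarith
  have hcost : cost p ≤ ∑ i, b i := by
    have h1 := hineq p
    rw [hfsum] at h1
    exact EReal.coe_le_coe_iff.1 h1
  -- final computation
  have hsum_ineq : q s ≤ ⟪s, ∑ i, p i⟫ - (∑ i, q (p i)) - ∑ i, b i := by
    have h1 : ∑ i, r i ≤ ∑ i, (⟪s, p i⟫ - q (p i) - b i) := Finset.sum_le_sum fun i _ => hrb i
    rw [hrsum] at h1
    have h2 : ∑ i, (⟪s, p i⟫ - q (p i) - b i)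
        = (∑ i, ⟪s, p i⟫) - (∑ i, q (p i)) - ∑ i, b i := by
      rw [← Finset.sum_sub_distrib, ← Finset.sum_sub_distrib]
    have h3 : ∑ i, ⟪s, p i⟫ = ⟪s, ∑ i, p i⟫ := (inner_sum _ _ _).symm
    rw [h2, h3] at h1
    exact h1
  have hqP : q (∑ i, p i) = ∑ i, q (p i) + cost p := q_sum p
  have hqsub := q_sub s (∑ i, p i)
  have hPn := q_nonneg (s - ∑ i, p i)
  have h7 : q (s - ∑ i, p i) ≤ cost p - ∑ i, b i := by linarith
  have h8 : q (s - ∑ i, p i) = 0 := le_antisymm (by linarith) hPn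
  have h9 : ∑ i, p i = s := by
    rw [q] at h8
    have h10 : ‖s - ∑ i, p i‖ = 0 := by
      have := norm_nonneg (s - ∑ i, p i)
      nlinarith
    have h11 : s - ∑ i, p i = 0 := norm_eq_zero.1 h10
    have := sub_eq_zero.1 h11
    exact this.symm
  refine ⟨?_, h9⟩
  have h12 : cost p = ∑ i, b i := le_antisymm hcost (by linarith)
  rw [hfsum, h12]
end
end

section
/- Let f₁,...,f_N : H → ℝ ∪ {+∞} be proper lsc convex with Σ_{i<j}⟨x_i,x_j⟩ ≤ Σ_i f_i(x_i) for all x ∈ H^N. If x = (x₁,...,x_N) attains equality and s = Σ x_i, then Σ_{i=1}^N e_{f_i^*}(s) = ½‖s‖² and x_i = prox_{f_i}(s) for each i. -/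
open scoped RealInnerProductSpace BigOperators

noncomputable section

variable {H : Type*} [NormedAddCommGroup H] [InnerProductSpace ℝ H] [CompleteSpace H]

lemma ecoe_sum {α : Type*} (s : Finset α) (g : α → ℝ) :
    ((∑ i ∈ s, g i : ℝ) : EReal) = ∑ i ∈ s, ((g i : ℝ) : EReal) :=
  map_sum (⟨⟨Real.toEReal, EReal.coe_zero⟩, EReal.coe_add⟩ : ℝ →+ EReal) g s

lemma norm_sq_sum {N : ℕ} (x : Fin N → H) :
    ‖∑ j, x j‖ ^ 2 = 2 * cost x + ∑ j, ‖x j‖ ^ 2 := by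
  have h : (‖∑ j, x j‖:ℝ) ^ 2 = ∑ i : Fin N, ∑ j : Fin N, ⟪x i, x j⟫ := by
    rw [← real_inner_self_eq_norm_sq, sum_inner]
    exact Finset.sum_congr rfl fun i _ => inner_sum _ _ _
  have split : ∀ (i j : Fin N), ⟪x i, x j⟫ =
      (if i < j then ⟪x i, x j⟫ else 0) + (if j < i then ⟪x i, x j⟫ else 0)
        + (if i = j then ⟪x i, x j⟫ else 0) := by
    intro i j
    rcases lt_trichotomy i j with h' | h' | h'
    · simp [h', h'.ne, not_lt_of_gt h']
    · simp [h', lt_irrefl]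
    · simp [h'.ne', not_lt_of_gt h', h']
  rw [h]
  have h1 : ∑ i : Fin N, ∑ j : Fin N, ⟪x i, x j⟫
      = cost x + (∑ i : Fin N, ∑ j : Fin N, if j < i then ⟪x i, x j⟫ else 0)
        + ∑ i : Fin N, ∑ j : Fin N, (if i = j then ⟪x i, x j⟫ else 0) := by
    simp only [cost, ← Finset.sum_add_distrib]
    exact Finset.sum_congr rfl fun i _ => Finset.sum_congr rfl fun j _ => split i j
  rw [h1]
  have h2 : (∑ i : Fin N, ∑ j : Fin N, if j < i then ⟪x i, x j⟫ else 0) = cost x := by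
    rw [Finset.sum_comm]
    exact Finset.sum_congr rfl fun i _ => Finset.sum_congr rfl fun j _ => by
      rcases lt_or_ge i j with h' | h'
      · simp [h', real_inner_comm, not_lt_of_gt h']
      · simp [not_lt.mpr h', real_inner_comm]
  have h3 : (∑ i : Fin N, ∑ j : Fin N, (if i = j then ⟪x i, x j⟫ else 0)) = ∑ j, ‖x j‖^2 := by
    refine Finset.sum_congr rfl fun i _ => ?_
    rw [Finset.sum_ite_eq (Finset.univ) i (fun j => ⟪x i, x j⟫)]
    simp [real_inner_self_eq_norm_sq]
  rw [h2, h3]; ring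

lemma cost_eq {N : ℕ} (x : Fin N → H) :
    cost x = (‖∑ j, x j‖ ^ 2 - ∑ j, ‖x j‖ ^ 2) / 2 := by
  have := norm_sq_sum x; linarith

/-- If `x` attains equality in the `c`-splitting inequality and `s = ∑ᵢ xᵢ`, then
`∑ᵢ e_{fᵢ*}(s) = q(s)` and each `xᵢ` is the proximal point `prox_{fᵢ}(s)`. -/
theorem splitting_point_gives_envelope_equality {N : ℕ} (hN : 2 ≤ N)
    (f : Fin N → H → EReal)
    (hproper : ∀ i, (∃ x, f i x ≠ ⊤) ∧ ∀ x, f i x ≠ ⊥)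
    (hlsc : ∀ i, LowerSemicontinuous (f i))
    (hconv : ∀ i, EConvex (f i))
    (hineq : ∀ x : Fin N → H, ((cost x : ℝ) : EReal) ≤ ∑ i, f i (x i))
    (x : Fin N → H) (hx : ((cost x : ℝ) : EReal) = ∑ i, f i (x i)) :
    (∑ i, env (econj (f i)) (∑ j, x j) = ((q (∑ j, x j) : ℝ) : EReal)) ∧
    (∀ i, ∀ y : H,
      f i (x i) + ((q ((∑ j, x j) - x i) : ℝ) : EReal)
        ≤ f i y + ((q ((∑ j, x j) - y) : ℝ) : EReal)) := by
  classical
  set s : H := ∑ j, x j with hs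
  -- each f i (x i) is finite
  have hnb : ∀ i, f i (x i) ≠ ⊥ := fun i => (hproper i).2 (x i)
  have hsum_erase_ne_bot : ∀ i : Fin N, (∑ j ∈ Finset.univ.erase i, f j (x j)) ≠ ⊥ := by
    intro i
    induction (Finset.univ.erase i) using Finset.induction with
    | empty => simp
    | insert _ _ hnotmem ih =>
      rw [Finset.sum_insert hnotmem]
      intro hbot
      rcases EReal.add_eq_bot_iff.1 hbot with h | h
      · exact hnb _ h
      · exact ih h
  have hnt : ∀ i, f i (x i) ≠ ⊤ := by
    intro i hi
    have h1 : (∑ j, f j (x j)) = ⊤ := by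
      rw [← Finset.add_sum_erase _ _ (Finset.mem_univ i), hi,
        EReal.top_add_of_ne_bot (hsum_erase_ne_bot i)]
    rw [← hx] at h1
    exact EReal.coe_ne_top _ h1
  set r : Fin N → ℝ := fun i => (f i (x i)).toReal with hrdef
  have hco : ∀ i, f i (x i) = ((r i : ℝ) : EReal) := fun i =>
    (EReal.coe_toReal (hnt i) (hnb i)).symm
  have hr : ∑ i, r i = cost x := by
    have : ((∑ i, r i : ℝ) : EReal) = ((cost x : ℝ) : EReal) := by
      rw [ecoe_sum, hx]
      exact Finset.sum_congr rfl fun i _ => (hco i).symm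
    exact_mod_cast this
  -- subgradient inequality
  have hsub : ∀ (i : Fin N) (y : H),
      ((⟪s - x i, y - x i⟫ + r i : ℝ) : EReal) ≤ f i y := by
    intro i y
    set u : Fin N → H := Function.update x i y with hu
    have hsumu : ∑ j, u j = s - x i + y := by
      rw [hu, Finset.sum_update_of_mem (Finset.mem_univ i), ← Finset.erase_eq, hs,
        ← Finset.add_sum_erase _ _ (Finset.mem_univ i)]
      abel
    have hnormu : ∑ j, ‖u j‖ ^ 2 = (∑ j, ‖x j‖ ^ 2) - ‖x i‖ ^ 2 + ‖y‖ ^ 2 := by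
      have hfun : (fun j => ‖u j‖ ^ 2) = Function.update (fun j => ‖x j‖ ^ 2) i (‖y‖ ^ 2) := by
        funext j
        by_cases hj : j = i
        · subst hj; simp [hu]
        · simp [hu, Function.update_of_ne hj]
      have h4 : ‖x i‖ ^ 2 + ∑ j ∈ Finset.univ.erase i, ‖x j‖ ^ 2 = ∑ j, ‖x j‖ ^ 2 :=
        Finset.add_sum_erase Finset.univ (fun j => ‖x j‖ ^ 2) (Finset.mem_univ i)
      calc ∑ j, ‖u j‖ ^ 2 = ∑ j, Function.update (fun j => ‖x j‖ ^ 2) i (‖y‖ ^ 2) j := by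
            rw [← hfun]
        _ = ‖y‖ ^ 2 + ∑ j ∈ Finset.univ \ {i}, ‖x j‖ ^ 2 :=
            Finset.sum_update_of_mem (Finset.mem_univ i) _ _
        _ = (∑ j, ‖x j‖ ^ 2) - ‖x i‖ ^ 2 + ‖y‖ ^ 2 := by
            rw [← Finset.erase_eq]; linarith
    have hcu : cost u = cost x + ⟪y - x i, s - x i⟫ := by
      rw [cost_eq u, cost_eq x, hsumu, hnormu]
      have e1 : ‖s - x i + y‖ ^ 2 = ‖s - x i‖^2 + 2 * ⟪s - x i, y⟫ + ‖y‖^2 :=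
        norm_add_sq_real (s - x i) y
      have e2 : ‖s‖ ^ 2 = ‖s - x i‖^2 + 2 * ⟪s - x i, x i⟫ + ‖x i‖^2 := by
        have h5 := norm_add_sq_real (s - x i) (x i)
        rw [sub_add_cancel] at h5
        exact h5
      have e3 : ⟪y - x i, s - x i⟫ = ⟪s - x i, y⟫ - ⟪s - x i, x i⟫ := by
        rw [inner_sub_left, real_inner_comm y (s - x i), real_inner_comm (x i) (s - x i)]
      rw [e3]; rw [hs] at e1 e2 ⊢; linarith
    have h1 : ((cost u : ℝ) : EReal) ≤ ∑ j, f j (u j) := hineq u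
    have h2 : ∑ j, f j (u j) = f i y + ((cost x - r i : ℝ) : EReal) := by
      rw [← Finset.add_sum_erase _ _ (Finset.mem_univ i)]
      congr 1
      · rw [hu]; simp
      · have : ∀ j ∈ Finset.univ.erase i, f j (u j) = ((r j : ℝ) : EReal) := by
          intro j hj
          rw [hu, Function.update_of_ne (Finset.mem_erase.1 hj).1, hco j]
        rw [Finset.sum_congr rfl this, ← ecoe_sum]
        congr 1
        have h6 : r i + ∑ j ∈ Finset.univ.erase i, r j = ∑ j, r j :=
          Finset.add_sum_erase Finset.univ r (Finset.mem_univ i)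
        rw [hr] at h6
        linarith
    rw [h2, hcu] at h1
    -- h1 : ((cost x + ⟪y - x i, s - x i⟫ : ℝ) : EReal) ≤ f i y + ((cost x - r i : ℝ))
    have h3 := add_le_add_left h1 (((r i - cost x : ℝ) : EReal))
    calc ((⟪s - x i, y - x i⟫ + r i : ℝ) : EReal)
        = ((cost x + ⟪y - x i, s - x i⟫ : ℝ) : EReal) + ((r i - cost x : ℝ) : EReal) := by
          rw [← EReal.coe_add]
          norm_cast
          rw [real_inner_comm]
          ring
      _ ≤ (f i y + ((cost x - r i : ℝ) : EReal)) + ((r i - cost x : ℝ) : EReal) := h3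
      _ = f i y := by
          rw [add_assoc, ← EReal.coe_add]
          norm_num
  -- part 2
  have part2 : ∀ i, ∀ y : H,
      f i (x i) + ((q (s - x i) : ℝ) : EReal) ≤ f i y + ((q (s - y) : ℝ) : EReal) := by
    intro i y
    have key : (r i + q (s - x i) : ℝ) ≤ (⟪s - x i, y - x i⟫ + r i) + q (s - y) := by
      have expand : q (s - y) = q (s - x i) - ⟪s - x i, y - x i⟫ + q (y - x i) := by
        have h7 : s - y = (s - x i) - (y - x i) := by abel
        rw [h7, q, q, q, norm_sub_sq_real]
        ring
      have hq : 0 ≤ q (y - x i) := by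
        rw [q]; positivity
      linarith
    calc f i (x i) + ((q (s - x i) : ℝ) : EReal)
        = ((r i + q (s - x i) : ℝ) : EReal) := by rw [hco i, ← EReal.coe_add]
      _ ≤ (((⟪s - x i, y - x i⟫ + r i) + q (s - y) : ℝ) : EReal) := EReal.coe_le_coe_iff.2 key
      _ = ((⟪s - x i, y - x i⟫ + r i : ℝ) : EReal) + ((q (s - y) : ℝ) : EReal) := by
          rw [← EReal.coe_add]
      _ ≤ f i y + ((q (s - y) : ℝ) : EReal) := add_le_add_left (hsub i y) _
  -- per-coordinate envelope value
  have henv : ∀ i, env (econj (f i)) s = ((⟪s, x i⟫ - ‖x i‖^2/2 - r i : ℝ) : EReal) := by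
    intro i
    apply le_antisymm
    · -- upper bound: evaluate at u = s - x i
      have hconj : econj (f i) (s - x i) ≤ ((⟪s - x i, x i⟫ - r i : ℝ) : EReal) := by
        apply iSup_le
        intro z
        have hz := hsub i z
        calc ((⟪s - x i, z⟫ : ℝ) : EReal) - f i z
            ≤ ((⟪s - x i, z⟫ : ℝ) : EReal) - ((⟪s - x i, z - x i⟫ + r i : ℝ) : EReal) :=
              EReal.sub_le_sub le_rfl hz
          _ = ((⟪s - x i, x i⟫ - r i : ℝ) : EReal) := by
              rw [← EReal.coe_sub]
              norm_cast
              rw [inner_sub_right]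
              ring
      have hle : env (econj (f i)) s ≤ econj (f i) (s - x i) + ((q (s - (s - x i)) : ℝ) : EReal) :=
        iInf_le _ (s - x i)
      refine hle.trans ?_
      have : s - (s - x i) = x i := by abel
      rw [this]
      refine (add_le_add_left hconj _).trans ?_
      rw [← EReal.coe_add]
      apply EReal.coe_le_coe_iff.2
      rw [q, inner_sub_left, real_inner_self_eq_norm_sq]
      ring_nf
      linarith [real_inner_comm s (x i)]
    · -- lower bound
      apply le_iInf
      intro u
      have hconj : ((⟪u, x i⟫ - r i : ℝ) : EReal) ≤ econj (f i) u := by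
        have := le_iSup (fun z => ((⟪u, z⟫ : ℝ) : EReal) - f i z) (x i)
        rw [hco i] at this
        rwa [EReal.coe_sub]
      calc ((⟪s, x i⟫ - ‖x i‖^2/2 - r i : ℝ) : EReal)
          ≤ (((⟪u, x i⟫ - r i) + q (s - u) : ℝ) : EReal) := by
            apply EReal.coe_le_coe_iff.2
            have h0 : (0:ℝ) ≤ ‖u - (s - x i)‖ ^ 2 := by positivity
            have hexp : ‖u - (s - x i)‖ ^ 2
                = ‖u‖^2 - 2*⟪u, s⟫ + 2*⟪u, x i⟫ + ‖s - x i‖^2 := by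
              rw [norm_sub_sq_real, inner_sub_right]
              ring
            have hexp2 : ‖s - x i‖^2 = ‖s‖^2 - 2*⟪s, x i⟫ + ‖x i‖^2 :=
              norm_sub_sq_real s (x i)
            have hq1 : q (s - u) = (‖s‖^2 - 2*⟪s,u⟫ + ‖u‖^2)/2 := by
              rw [q, norm_sub_sq_real]
              ring
            rw [hq1]
            have := real_inner_comm s u
            linarith
        _ = ((⟪u, x i⟫ - r i : ℝ) : EReal) + ((q (s - u) : ℝ) : EReal) := by
            rw [← EReal.coe_add]
        _ ≤ econj (f i) u + ((q (s - u) : ℝ) : EReal) := add_le_add_left hconj _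
  -- sum up
  constructor
  · rw [Finset.sum_congr rfl fun i _ => henv i, ← ecoe_sum]
    congr 1
    have hsum1 : ∑ i, ⟪s, x i⟫ = ‖s‖^2 := by
      rw [← real_inner_self_eq_norm_sq]
      exact (inner_sum _ _ _).symm
    have hkey := norm_sq_sum x
    rw [← hs] at hkey
    have : ∑ i, (⟪s, x i⟫ - ‖x i‖^2/2 - r i) = (∑ i, ⟪s, x i⟫) - (∑ i, ‖x i‖^2)/2 - ∑ i, r i := by
      rw [Finset.sum_sub_distrib, Finset.sum_sub_distrib, Finset.sum_div]
    rw [this, hsum1, hr, q]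
    linarith
  · exact part2
end
end
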